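/- If φ is an ordering of the vertices of a graph G that minimizes μ_G, then the sequence of right degrees is non-increasing: for all positions i < j, rd_φ(φ⁻¹(i)) ≥ rd_φ(φ⁻¹(j)). -/

import Mathlib

open Finset

variable {V : Type*} [Fintype V] [DecidableEq V]

/-- MSVC cost of an ordering `φ` (positions are `(φ v : ℕ) + 1`, i.e. in `{1,…,n}`). -/
def msvcCost {n : ℕ} (G : SimpleGraph V) [DecidableRel G.Adj] (φ : V ≃ Fin n) : ℕ :=
  ∑ e ∈ G.edgeFinset,
    Sym2.lift ⟨fun u v => min ((φ u : ℕ) + 1) ((φ v : ℕ) + 1), fun _ _ => min_comm _ _⟩ e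

/-- Right degree of `v` in the ordering `φ`. -/
def rightDeg {n : ℕ} (G : SimpleGraph V) [DecidableRel G.Adj] (φ : V ≃ Fin n) (v : V) : ℕ :=
  ((G.neighborFinset v).filter fun u => φ v < φ u).card

/-- Endpoint of an edge with smaller position. -/
def leftFn {n : ℕ} (φ : V ≃ Fin n) : Sym2 V → V :=
  Sym2.lift ⟨fun x y => if φ x ≤ φ y then x else y, by
    intro x y
    rcases lt_trichotomy (φ x) (φ y) with h | h | h
    · simp [h.le, not_le.mpr h]
    · simp [φ.injective h]
    · simp [h.le, not_le.mpr h]⟩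

/-- Endpoint of an edge with larger position. -/
def rightFn {n : ℕ} (φ : V ≃ Fin n) : Sym2 V → V :=
  Sym2.lift ⟨fun x y => if φ x ≤ φ y then y else x, by
    intro x y
    rcases lt_trichotomy (φ x) (φ y) with h | h | h
    · simp [h.le, not_le.mpr h]
    · simp [φ.injective h]
    · simp [h.le, not_le.mpr h]⟩

lemma msvcCost_eq {n : ℕ} (G : SimpleGraph V) [DecidableRel G.Adj] (φ : V ≃ Fin n) :
    msvcCost G φ = ∑ v, ((φ v : ℕ) + 1) * rightDeg G φ v := by
  have h1 : ∀ v : V, ((φ v : ℕ) + 1) * rightDeg G φ v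
      = ∑ _w ∈ (G.neighborFinset v).filter (fun u => φ v < φ u), ((φ v : ℕ) + 1) := by
    intro v; rw [Finset.sum_const, smul_eq_mul, mul_comm, rightDeg]
  simp_rw [h1]
  have h2 : ∑ p ∈ Finset.univ.sigma (fun v => (G.neighborFinset v).filter (fun u => φ v < φ u)),
      ((φ p.1 : ℕ) + 1)
      = ∑ v, ∑ _w ∈ (G.neighborFinset v).filter (fun u => φ v < φ u), ((φ v : ℕ) + 1) :=
    Finset.sum_sigma _ _ _
  rw [← h2]
  symm
  refine Finset.sum_nbij' (i := fun p => s(p.1, p.2))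
    (j := fun e => (⟨leftFn φ e, rightFn φ e⟩ : (Σ _v : V, V))) ?_ ?_ ?_ ?_ ?_
  · intro p hp
    simp only [Finset.mem_sigma, Finset.mem_univ, true_and, Finset.mem_filter,
      SimpleGraph.mem_neighborFinset] at hp
    rw [SimpleGraph.mem_edgeFinset]
    exact hp.1
  · intro e he
    rw [SimpleGraph.mem_edgeFinset] at he
    induction e with
    | _ x y =>
      have hadj : G.Adj x y := he
      have hxy : φ x ≠ φ y := fun h => G.ne_of_adj hadj (φ.injective h)
      simp only [Finset.mem_sigma, Finset.mem_univ, true_and, leftFn, rightFn, Sym2.lift_mk]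
      by_cases h : φ x ≤ φ y
      · simp only [h, if_true, Finset.mem_filter, SimpleGraph.mem_neighborFinset]
        exact ⟨hadj, lt_of_le_of_ne h hxy⟩
      · simp only [h, if_false, Finset.mem_filter, SimpleGraph.mem_neighborFinset]
        exact ⟨hadj.symm, lt_of_not_ge h⟩
  · intro p hp
    simp only [Finset.mem_sigma, Finset.mem_univ, true_and, Finset.mem_filter,
      SimpleGraph.mem_neighborFinset] at hp
    have h : φ p.1 ≤ φ p.2 := hp.2.le
    simp [leftFn, rightFn, h]
  · intro e he
    induction e with
    | _ x y =>
      simp only [leftFn, rightFn, Sym2.lift_mk]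
      by_cases h : φ x ≤ φ y
      · simp [h]
      · simp [h, Sym2.eq_swap]
  · intro p hp
    simp only [Finset.mem_sigma, Finset.mem_univ, true_and, Finset.mem_filter,
      SimpleGraph.mem_neighborFinset] at hp
    have h : (φ p.1 : ℕ) + 1 ≤ (φ p.2 : ℕ) + 1 := by
      have := Fin.lt_def.mp hp.2; omega
    simp [Sym2.lift_mk, min_eq_left h, hp.2.le]

lemma rightDeg_step {n : ℕ} (G : SimpleGraph V) [DecidableRel G.Adj] (φ : V ≃ Fin n)
    (hopt : ∀ ψ : V ≃ Fin n, msvcCost G φ ≤ msvcCost G ψ)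
    (a b : Fin n) (hab : (a : ℕ) + 1 = (b : ℕ)) :
    rightDeg G φ (φ.symm b) ≤ rightDeg G φ (φ.symm a) := by
  classical
  set u := φ.symm a with hu
  set v := φ.symm b with hv
  have hφu : φ u = a := φ.apply_symm_apply a
  have hφv : φ v = b := φ.apply_symm_apply b
  have hne' : a ≠ b := by
    intro h; rw [h] at hab; omega
  have hne : u ≠ v := by
    intro h; apply hne'; rw [← hφu, ← hφv, h]
  set ψ : V ≃ Fin n := φ.trans (Equiv.swap a b) with hψdef
  have hψ : ∀ w, ψ w = Equiv.swap a b (φ w) := fun _ => rfl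
  have hψu : ψ u = b := by rw [hψ, hφu, Equiv.swap_apply_left]
  have hψv : ψ v = a := by rw [hψ, hφv, Equiv.swap_apply_right]
  have hψw : ∀ w, w ≠ u → w ≠ v → ψ w = φ w := by
    intro w h1 h2
    rw [hψ, Equiv.swap_apply_of_ne_of_ne]
    · intro h; exact h1 (by rw [hu, ← h, Equiv.symm_apply_apply])
    · intro h; exact h2 (by rw [hv, ← h, Equiv.symm_apply_apply])
  have hneq : ∀ w : V, w ≠ u → (φ w : ℕ) ≠ (a : ℕ) := by
    intro w h1 h
    exact h1 (by rw [hu, ← Fin.ext h, Equiv.symm_apply_apply])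
  have hneq' : ∀ w : V, w ≠ v → (φ w : ℕ) ≠ (b : ℕ) := by
    intro w h2 h
    exact h2 (by rw [hv, ← Fin.ext h, Equiv.symm_apply_apply])
  set t : ℕ := if G.Adj u v then 1 else 0 with ht
  -- rightDeg of ψ at vertices other than u, v
  have rd_other : ∀ w, w ≠ u → w ≠ v → rightDeg G ψ w = rightDeg G φ w := by
    intro w h1 h2
    unfold rightDeg
    congr 1
    apply Finset.filter_congr
    intro x _hx
    have hwx : ψ w = φ w := hψw w h1 h2
    have h1' := hneq w h1
    have h2' := hneq' w h2
    by_cases hxu : x = u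
    · subst hxu
      rw [hwx, hψu, hφu]
      simp only [Fin.lt_def]
      omega
    · by_cases hxv : x = v
      · subst hxv
        rw [hwx, hψv, hφv]
        simp only [Fin.lt_def]
        omega
      · rw [hwx, hψw x hxu hxv]
  -- rightDeg of ψ at u
  have rd_u : rightDeg G ψ u + t = rightDeg G φ u := by
    unfold rightDeg
    have hfil : (G.neighborFinset u).filter (fun x => ψ u < ψ x)
        = ((G.neighborFinset u).filter (fun x => φ u < φ x)).erase v := by
      ext x
      simp only [Finset.mem_erase, Finset.mem_filter, SimpleGraph.mem_neighborFinset]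
      by_cases hxv : x = v
      · subst hxv
        rw [hψu, hψv]
        simp only [Fin.lt_def]
        constructor
        · rintro ⟨_, hlt⟩; omega
        · rintro ⟨hc, _⟩; exact absurd rfl hc
      · constructor
        · rintro ⟨hadj, hlt⟩
          have hxu : x ≠ u := fun h => G.ne_of_adj hadj h.symm
          rw [hψu, hψw x hxu hxv] at hlt
          refine ⟨hxv, hadj, ?_⟩
          rw [hφu]
          rw [Fin.lt_def] at hlt ⊢
          omega
        · rintro ⟨_, hadj, hlt⟩
          have hxu : x ≠ u := fun h => G.ne_of_adj hadj h.symm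
          refine ⟨hadj, ?_⟩
          rw [hψu, hψw x hxu hxv]
          rw [hφu] at hlt
          have h2' := hneq' x hxv
          rw [Fin.lt_def] at hlt ⊢
          omega
    rw [hfil]
    by_cases hadj : G.Adj u v
    · have hmem : v ∈ (G.neighborFinset u).filter (fun x => φ u < φ x) := by
        simp only [Finset.mem_filter, SimpleGraph.mem_neighborFinset]
        refine ⟨hadj, ?_⟩
        rw [hφu, hφv, Fin.lt_def]
        omega
      rw [Finset.card_erase_of_mem hmem, ht, if_pos hadj]
      have hpos : 0 < ((G.neighborFinset u).filter (fun x => φ u < φ x)).card :=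
        Finset.card_pos.mpr ⟨v, hmem⟩
      omega
    · have hmem : v ∉ (G.neighborFinset u).filter (fun x => φ u < φ x) := by
        simp only [Finset.mem_filter, SimpleGraph.mem_neighborFinset]
        intro hc; exact hadj hc.1
      rw [Finset.erase_eq_of_notMem hmem, ht, if_neg hadj]
      rfl
  -- rightDeg of ψ at v
  have rd_v : rightDeg G ψ v = rightDeg G φ v + t := by
    unfold rightDeg
    by_cases hadj : G.Adj u v
    · have hfil : (G.neighborFinset v).filter (fun x => ψ v < ψ x)
          = insert u ((G.neighborFinset v).filter (fun x => φ v < φ x)) := by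
        ext x
        simp only [Finset.mem_insert, Finset.mem_filter, SimpleGraph.mem_neighborFinset]
        by_cases hxu : x = u
        · subst hxu
          have hlt : G.Adj v u ∧ ψ v < ψ u := by
            refine ⟨hadj.symm, ?_⟩
            rw [hψu, hψv, Fin.lt_def]
            omega
          simp [hlt.1, hlt.2]
        · constructor
          · rintro ⟨hadj2, hlt⟩
            have hxv : x ≠ v := fun h => G.ne_of_adj hadj2 h.symm
            rw [hψv, hψw x hxu hxv] at hlt
            right
            refine ⟨hadj2, ?_⟩
            rw [hφv]
            have h1' := hneq x hxu
            have h2' := hneq' x hxv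
            rw [Fin.lt_def] at hlt ⊢
            omega
          · rintro (hc | ⟨hadj2, hlt⟩)
            · exact absurd hc hxu
            · have hxv : x ≠ v := fun h => G.ne_of_adj hadj2 h.symm
              refine ⟨hadj2, ?_⟩
              rw [hψv, hψw x hxu hxv]
              rw [hφv] at hlt
              rw [Fin.lt_def] at hlt ⊢
              omega
      rw [hfil, Finset.card_insert_of_notMem, ht, if_pos hadj]
      simp only [Finset.mem_filter, SimpleGraph.mem_neighborFinset]
      rintro ⟨_, hlt⟩
      rw [hφv, hφu, Fin.lt_def] at hlt
      omega
    · have hfil : (G.neighborFinset v).filter (fun x => ψ v < ψ x)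
          = (G.neighborFinset v).filter (fun x => φ v < φ x) := by
        apply Finset.filter_congr
        intro x hx
        rw [SimpleGraph.mem_neighborFinset] at hx
        have hxv : x ≠ v := fun h => G.ne_of_adj hx h.symm
        have hxu : x ≠ u := fun h => hadj (by rw [h] at hx; exact hx.symm)
        rw [hψv, hψw x hxu hxv, hφv]
        have h1' := hneq x hxu
        have h2' := hneq' x hxv
        simp only [Fin.lt_def]
        omega
      rw [hfil, ht, if_neg hadj]
      rfl
  -- compare costs
  have hle := hopt ψ
  rw [msvcCost_eq, msvcCost_eq] at hle
  have hsum : ∀ f : V → ℕ, ∑ w, f w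
      = f u + (f v + ∑ w ∈ (Finset.univ.erase u).erase v, f w) := by
    intro f
    rw [← Finset.add_sum_erase _ f (Finset.mem_univ u)]
    congr 1
    rw [← Finset.add_sum_erase _ f (Finset.mem_erase.mpr ⟨hne.symm, Finset.mem_univ v⟩)]
  rw [hsum (fun w => ((φ w : ℕ) + 1) * rightDeg G φ w),
      hsum (fun w => ((ψ w : ℕ) + 1) * rightDeg G ψ w)] at hle
  have hC : ∑ w ∈ (Finset.univ.erase u).erase v, ((ψ w : ℕ) + 1) * rightDeg G ψ w
      = ∑ w ∈ (Finset.univ.erase u).erase v, ((φ w : ℕ) + 1) * rightDeg G φ w := by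
    apply Finset.sum_congr rfl
    intro w hw
    have hwv : w ≠ v := (Finset.mem_erase.mp hw).1
    have hwu : w ≠ u := (Finset.mem_erase.mp (Finset.mem_erase.mp hw).2).1
    rw [hψw w hwu hwv, rd_other w hwu hwv]
  rw [hC, hψu, hψv, hφu, hφv] at hle
  have hRv : rightDeg G φ v ≤ rightDeg G ψ u := by nlinarith [hle]
  omega

theorem stmt1 {n : ℕ} (G : SimpleGraph V) [DecidableRel G.Adj] (φ : V ≃ Fin n)
    (hopt : ∀ ψ : V ≃ Fin n, msvcCost G φ ≤ msvcCost G ψ)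
    (i j : Fin n) (hij : i < j) :
    rightDeg G φ (φ.symm j) ≤ rightDeg G φ (φ.symm i) := by
  have key : ∀ d : ℕ, ∀ (h : (i : ℕ) + d < n),
      rightDeg G φ (φ.symm ⟨(i : ℕ) + d, h⟩) ≤ rightDeg G φ (φ.symm i) := by
    intro d
    induction d with
    | zero => intro h; simp
    | succ d ih =>
      intro h
      have h' : (i : ℕ) + d < n := by omega
      have step := rightDeg_step G φ hopt ⟨(i : ℕ) + d, h'⟩ ⟨(i : ℕ) + d + 1, by omega⟩ rfl
      have heq : (⟨(i : ℕ) + (d + 1), h⟩ : Fin n) = ⟨(i : ℕ) + d + 1, by omega⟩ := by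
        apply Fin.ext; simp; omega
      rw [heq]
      exact le_trans step (ih h')
  have hj : j = ⟨(i : ℕ) + ((j : ℕ) - (i : ℕ)), by omega⟩ := by
    apply Fin.ext
    have := Fin.lt_def.mp hij
    simp only []
    omega
  rw [hj]
  exact key _ _
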